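/- Let {T_n} be a sequence in B(X) such that each T_n commutes with T, which is (n₀,m)-regular for nonnegative integers n₀, m, and suppose there exists C > 0 with ‖T_n (T−I)^m x‖ ≤ C‖(T−I)^m x‖ for all n and all x ∈ X. Then the continuous seminorm γ(x) = limsup_{n→∞} ‖T_n (T−I)^m x‖ satisfies γ(T x) = γ(x) for every x ∈ X (equivalently, the operator V_γ induced by T on the completion of X modulo the kernel of γ is an isometry). -/

import Mathlib

open Filter Topology

/-- (n₀,m)-regularity: ‖(T T_n − T_{n+n₀})x‖ → 0 for every x ∈ range((T−I)^m). -/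
def RegularSeq {X : Type*} [NormedAddCommGroup X] [NormedSpace ℂ X]
    (T : X →L[ℂ] X) (Tn : ℕ → X →L[ℂ] X) (n₀ m : ℕ) : Prop :=
  ∀ x ∈ Set.range ⇑((T - 1) ^ m),
    Tendsto (fun n => ‖T (Tn n x) - Tn (n + n₀) x‖) atTop (𝓝 0)

private lemma limsup_le_aux (f g : ℕ → ℝ) (hf0 : ∀ n, 0 ≤ f n)
    (M : ℝ) (hfb : ∀ n, f n ≤ M) (hg0 : ∀ n, 0 ≤ g n)
    (h : Tendsto (fun n => |f n - g n|) atTop (𝓝 0)) :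
    limsup g atTop ≤ limsup f atTop := by
  have hfbdd : IsBoundedUnder (· ≤ ·) atTop f :=
    isBoundedUnder_of ⟨M, hfb⟩
  have hfcob : IsCoboundedUnder (· ≤ ·) atTop f :=
    (isBoundedUnder_of ⟨0, hf0⟩ : IsBoundedUnder (· ≥ ·) atTop f).isCoboundedUnder_le
  refine le_of_forall_pos_le_add fun ε hε => ?_
  have hev : ∀ᶠ n in atTop, g n ≤ f n + ε := by
    filter_upwards [(Metric.tendsto_nhds.mp h ε hε)] with n hn
    have : |f n - g n| < ε := by simpa [Real.dist_eq] using hn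
    have := abs_lt.mp this
    linarith [this.1]
  calc limsup g atTop ≤ limsup (fun n => f n + ε) atTop := by
        refine limsup_le_limsup hev ?_ ?_
        · exact (isBoundedUnder_of ⟨0, hg0⟩ : IsBoundedUnder (· ≥ ·) atTop g).isCoboundedUnder_le
        · exact isBoundedUnder_of ⟨M + ε, fun n => by linarith [hfb n]⟩
    _ = limsup f atTop + ε := limsup_add_const atTop f ε hfbdd hfcob

/-- If each T_n commutes with T, {T_n} is (n₀,m)-regular and
‖T_n (T−I)^m x‖ ≤ C‖(T−I)^m x‖ for all n, x, then the seminorm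
γ(x) = limsup_n ‖T_n (T−I)^m x‖ satisfies γ(T x) = γ(x) for every x. -/
theorem stmt5 {X : Type*} [NormedAddCommGroup X] [NormedSpace ℂ X] [CompleteSpace X]
    (T : X →L[ℂ] X) (Tn : ℕ → X →L[ℂ] X)
    (hcomm : ∀ n, Tn n ∘L T = T ∘L Tn n)
    (n₀ m : ℕ) (hreg : RegularSeq T Tn n₀ m)
    (C : ℝ) (hC : 0 < C)
    (hbdd : ∀ n (x : X), ‖Tn n (((T - 1) ^ m) x)‖ ≤ C * ‖((T - 1) ^ m) x‖) :
    ∀ x : X,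
      limsup (fun n => ‖Tn n (((T - 1) ^ m) (T x))‖) atTop
        = limsup (fun n => ‖Tn n (((T - 1) ^ m) x)‖) atTop := by
  intro x
  set y : X := ((T - 1) ^ m) x with hy
  -- (T-1)^m commutes with T
  have hTc : ((T - 1) ^ m) * T = T * ((T - 1) ^ m) := by
    have : Commute (T - 1) T := ((Commute.refl T).sub_left (Commute.one_left T))
    exact (this.pow_left m).eq
  have hTy : ((T - 1) ^ m) (T x) = T y := by
    have := congrArg (fun S : X →L[ℂ] X => S x) hTc
    rw [hy]
    simpa only [ContinuousLinearMap.mul_apply] using this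
  -- Tn n (T y) = T (Tn n y)
  have hTn : ∀ n, Tn n (T y) = T (Tn n y) := fun n => by
    have := congrArg (fun S : X →L[ℂ] X => S y) (hcomm n)
    simpa using this
  have hLHS : (fun n => ‖Tn n (((T - 1) ^ m) (T x))‖) = fun n => ‖T (Tn n y)‖ := by
    funext n; rw [hTy, hTn n]
  rw [hLHS]
  -- regularity gives convergence of difference
  have hd : Tendsto (fun n => ‖T (Tn n y) - Tn (n + n₀) y‖) atTop (𝓝 0) :=
    hreg y ⟨x, rfl⟩
  have habs : Tendsto (fun n => |‖Tn (n + n₀) y‖ - ‖T (Tn n y)‖|) atTop (𝓝 0) := by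
    refine squeeze_zero (fun n => abs_nonneg _) (fun n => ?_) hd
    have := abs_norm_sub_norm_le (Tn (n + n₀) y) (T (Tn n y))
    simpa [norm_sub_rev] using this
  have habs' : Tendsto (fun n => |‖T (Tn n y)‖ - ‖Tn (n + n₀) y‖|) atTop (𝓝 0) := by
    simpa [abs_sub_comm] using habs
  -- bounds
  have hb1 : ∀ n, ‖Tn (n + n₀) y‖ ≤ C * ‖y‖ := fun n => hbdd (n + n₀) x
  have hb2 : ∀ n, ‖T (Tn n y)‖ ≤ ‖T‖ * (C * ‖y‖) := fun n => by
    calc ‖T (Tn n y)‖ ≤ ‖T‖ * ‖Tn n y‖ := T.le_opNorm _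
      _ ≤ ‖T‖ * (C * ‖y‖) :=
        mul_le_mul_of_nonneg_left (hbdd n x) (norm_nonneg T)
  have key : limsup (fun n => ‖T (Tn n y)‖) atTop
      = limsup (fun n => ‖Tn (n + n₀) y‖) atTop := by
    apply le_antisymm
    · exact limsup_le_aux _ _ (fun n => norm_nonneg _) (C * ‖y‖) hb1
        (fun n => norm_nonneg _) habs
    · exact limsup_le_aux _ _ (fun n => norm_nonneg _) (‖T‖ * (C * ‖y‖)) hb2
        (fun n => norm_nonneg _) habs'
  rw [key]
  exact limsup_nat_add (fun n => ‖Tn n y‖) n₀
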